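/- Let N > 5040 be an integer and p its largest prime factor, appearing in N with exponent 1. If p ≥ log N, then G(N) < G(N/p), where G(n) = σ(n)/(n · log log n). -/

import Mathlib

/-- `G n = σ(n) / (n * log log n)`. -/
noncomputable def G (n : ℕ) : ℝ :=
  (∑ d ∈ n.divisors, (d : ℝ)) / (n * Real.log (Real.log n))

theorem stmt_0 (N p : ℕ) (hN : N > 5040) (hp : p.Prime) (hpN : p ∣ N)
    (hp1 : ¬ p ^ 2 ∣ N) (hmax : ∀ q : ℕ, q.Prime → q ∣ N → q ≤ p)
    (hNp : (N / p : ℝ) > Real.exp 1) (hge : (p : ℝ) ≥ Real.log N) :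
    G N < G (N / p) := by
  set M := N / p with hMdef
  have hp0 : 0 < p := hp.pos
  have hpR : (0 : ℝ) < p := by exact_mod_cast hp0
  have hMN : M * p = N := Nat.div_mul_cancel hpN
  have hM0 : 0 < M := Nat.div_pos (Nat.le_of_dvd (by omega) hpN) hp0
  have hndvd : ¬ p ∣ M := by
    intro h
    obtain ⟨k, hk⟩ := h
    exact hp1 ⟨k, by rw [← hMN, hk]; ring⟩
  have hcop : Nat.Coprime M p := ((Nat.Prime.coprime_iff_not_dvd hp).mpr hndvd).symm
  have hMcast : (M : ℝ) = (N : ℝ) / p := by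
    rw [eq_div_iff hpR.ne']; exact_mod_cast hMN
  have hMe : (M : ℝ) > Real.exp 1 := by rw [hMcast]; exact hNp
  have hMR : (0 : ℝ) < M := lt_trans (Real.exp_pos 1) hMe
  have hlogM : 1 < Real.log M := by
    rw [← Real.log_exp 1]; exact Real.log_lt_log (Real.exp_pos 1) hMe
  have hlogp : 0 < Real.log p := Real.log_pos (by exact_mod_cast hp.one_lt)
  have hNcast : (N : ℝ) = (M : ℝ) * p := by exact_mod_cast hMN.symm
  have hlogN : Real.log N = Real.log M + Real.log p := by
    rw [hNcast, Real.log_mul hMR.ne' hpR.ne']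
  have hlogM_lt : Real.log M < Real.log N := by rw [hlogN]; linarith
  have hLM : 0 < Real.log (Real.log M) := Real.log_pos hlogM
  have hLNlt : Real.log (Real.log M) < Real.log (Real.log N) :=
    Real.log_lt_log (by linarith) hlogM_lt
  have h1 : Real.log (Real.log N) ≤ Real.log p := Real.log_le_log (by linarith) hge
  have hlplm : Real.log (Real.log M) < Real.log p := lt_of_lt_of_le hLNlt h1
  -- key inequality: log log N - log log M ≥ log p / log N
  have hkey : Real.log p / Real.log N ≤ Real.log (Real.log N) - Real.log (Real.log M) := by
    have hq : 0 < Real.log N / Real.log M := div_pos (by linarith) (by linarith)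
    have h := Real.one_sub_inv_le_log_of_pos hq
    rw [Real.log_div (by linarith : Real.log N > 0).ne' (by linarith : Real.log M > 0).ne',
      inv_div] at h
    have hNne : Real.log N ≠ 0 := (by linarith : (0:ℝ) < Real.log N).ne'
    have heq : Real.log p / Real.log N = 1 - Real.log M / Real.log N := by
      field_simp
      linarith
    linarith
  have h2 : Real.log p / (p : ℝ) ≤ Real.log p / Real.log N :=
    div_le_div_of_nonneg_left hlogp.le (by linarith) hge
  -- main scalar inequality
  have hmain : ((p : ℝ) + 1) * Real.log (Real.log M) < (p : ℝ) * Real.log (Real.log N) := by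
    have h3 : Real.log p ≤ (p : ℝ) * (Real.log (Real.log N) - Real.log (Real.log M)) := by
      have h4 := le_trans h2 hkey
      calc Real.log p = Real.log p / p * p := by field_simp
        _ ≤ (Real.log (Real.log N) - Real.log (Real.log M)) * p :=
            mul_le_mul_of_nonneg_right h4 hpR.le
        _ = (p : ℝ) * (Real.log (Real.log N) - Real.log (Real.log M)) := by ring
    nlinarith
  -- sigma factorization
  have hsum : (∑ d ∈ N.divisors, (d : ℝ)) = (∑ d ∈ M.divisors, (d : ℝ)) * ((p : ℝ) + 1) := by
    have h0 := hcop.sum_divisors_mul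
    rw [hMN, hp.divisors, Finset.sum_pair hp.one_lt.ne] at h0
    rw [← Nat.cast_sum, ← Nat.cast_sum, h0]
    push_cast
    ring
  have hSM : 0 < ∑ d ∈ M.divisors, (d : ℝ) := by
    apply Finset.sum_pos
    · intro d hd
      exact_mod_cast Nat.pos_of_mem_divisors hd
    · exact ⟨M, Nat.mem_divisors_self M hM0.ne'⟩
  have hLN0 : 0 < Real.log (Real.log N) := lt_trans hLM hLNlt
  unfold G
  set SM := ∑ d ∈ M.divisors, (d : ℝ) with hSMdef
  set LM := Real.log (Real.log M) with hLMdef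
  set LN := Real.log (Real.log N) with hLNdef
  rw [div_lt_div_iff₀ (mul_pos (by exact_mod_cast (by omega : 0 < N)) hLN0) (mul_pos hMR hLM),
    hsum, hNcast]
  nlinarith [mul_pos (mul_pos hSM hMR) (sub_pos.mpr hmain)]
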